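/- (Approximate invariance) If the kernel is admissible with β = min_r |γ_0(r)|² > 0 and B = max_r |γ_0(r)|², then for each m ≥ 1, f ∈ L²(G), g ∈ G: Σ_{p∈{1,…,J}^m} ‖S[p]L_g f − S[p]f‖² ≤ 4·B·(1−β)^m ‖f‖². -/

import Mathlib

open scoped BigOperators
open MeasureTheory

noncomputable def conv {G : Type*} [Group G] [Fintype G] (f g : G → ℂ) : G → ℂ :=
  fun x => (Fintype.card G : ℂ)⁻¹ * ∑ y, f y * g (y⁻¹ * x)

noncomputable def nsq {G : Type*} [Fintype G] (f : G → ℂ) : ℝ :=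
  (Fintype.card G : ℝ)⁻¹ * ∑ x, Complex.normSq (f x)

noncomputable def ip {G : Type*} [Fintype G] (f g : G → ℂ) : ℂ :=
  (Fintype.card G : ℂ)⁻¹ * ∑ x, f x * (starRingEnd ℂ) (g x)

noncomputable def gwavelet {G : Type*} [Group G] {k : ℕ} (d : Fin k → ℕ)
    (π : (r : Fin k) → G →* Matrix (Fin (d r)) (Fin (d r)) ℂ)
    (γ : Fin k → ℂ) : G → ℂ :=
  fun x => ∑ r, (d r : ℂ) * γ r * Matrix.trace (π r x)

noncomputable def Upath {G : Type*} [Group G] [Fintype G] {J : ℕ}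
    (ψ : Fin J → G → ℂ) : List (Fin J) → (G → ℂ) → G → ℂ
  | [], f => f
  | j :: p, f => Upath ψ p fun x => ((‖conv (ψ j) f x‖ : ℝ) : ℂ)

noncomputable def Sop {G : Type*} [Group G] [Fintype G] {k J : ℕ} (d : Fin k → ℕ)
    (π : (r : Fin k) → G →* Matrix (Fin (d r)) (Fin (d r)) ℂ)
    (γ : Fin (J + 1) → Fin k → ℂ) (p : List (Fin J)) (f : G → ℂ) : G → ℂ :=
  conv (gwavelet d π (γ 0)) (Upath (fun j => gwavelet d π (γ j.succ)) p f)

set_option linter.unusedSectionVars false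

section basics
variable {G : Type*} [Group G] [Fintype G]

lemma cardC_ne_zero : (Fintype.card G : ℂ) ≠ 0 := by
  exact_mod_cast Fintype.card_ne_zero

lemma cardR_pos : (0:ℝ) < (Fintype.card G : ℝ) := by exact_mod_cast Fintype.card_pos

lemma nsq_nonneg (f : G → ℂ) : 0 ≤ nsq f := by
  unfold nsq
  apply mul_nonneg (by positivity)
  exact Finset.sum_nonneg fun x _ => Complex.normSq_nonneg _

lemma ip_self (f : G → ℂ) : ip f f = (nsq f : ℝ) := by
  unfold ip nsq
  push_cast
  rw [Finset.sum_congr rfl fun x _ => Complex.mul_conj (f x)]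

lemma ip_self_re (f : G → ℂ) : (ip f f).re = nsq f := by
  rw [ip_self]; simp

lemma ip_conj_symm (f g : G → ℂ) : ip f g = (starRingEnd ℂ) (ip g f) := by
  unfold ip
  rw [map_mul, map_sum]
  congr 1
  · simp
  · exact Finset.sum_congr rfl fun x _ => by rw [map_mul, Complex.conj_conj, mul_comm]

lemma ip_re_symm (f g : G → ℂ) : (ip f g).re = (ip g f).re := by
  rw [ip_conj_symm]; simp

lemma nsq_sub_le (f g : G → ℂ) :
    nsq (fun x => f x - g x) ≤ 2 * nsq f + 2 * nsq g := by
  unfold nsq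
  have h : ∑ x, Complex.normSq (f x - g x)
      ≤ ∑ x, (2 * Complex.normSq (f x) + 2 * Complex.normSq (g x)) := by
    refine Finset.sum_le_sum fun x _ => ?_
    nlinarith [Complex.normSq_nonneg (f x + g x), Complex.normSq_add (f x) (g x),
      Complex.normSq_sub (f x) (g x)]
  calc (Fintype.card G : ℝ)⁻¹ * ∑ x, Complex.normSq ((fun x => f x - g x) x)
      ≤ (Fintype.card G : ℝ)⁻¹ * ∑ x, (2 * Complex.normSq (f x) + 2 * Complex.normSq (g x)) := by
        exact mul_le_mul_of_nonneg_left h (by positivity)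
    _ = 2 * ((Fintype.card G : ℝ)⁻¹ * ∑ x, Complex.normSq (f x))
        + 2 * ((Fintype.card G : ℝ)⁻¹ * ∑ x, Complex.normSq (g x)) := by
        rw [Finset.sum_add_distrib, ← Finset.mul_sum, ← Finset.mul_sum]; ring

lemma nsq_translate (f : G → ℂ) (g : G) : nsq (fun x => f (g⁻¹ * x)) = nsq f := by
  unfold nsq
  congr 1
  exact Fintype.sum_equiv (Equiv.mulLeft g⁻¹) _ _ (fun x => rfl)

lemma nsq_abs (u : G → ℂ) : nsq (fun x => ((‖u x‖ : ℝ) : ℂ)) = nsq u := by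
  unfold nsq
  congr 1
  refine Finset.sum_congr rfl fun x _ => ?_
  rw [Complex.normSq_ofReal, ← Complex.sq_norm, sq]

lemma ip_cauchy (u v : G → ℂ) :
    |(ip u v).re| ≤ Real.sqrt (nsq u) * Real.sqrt (nsq v) := by
  have h1 : |(ip u v).re| ≤ ‖ip u v‖ := Complex.abs_re_le_norm _
  refine h1.trans ?_
  unfold ip nsq
  rw [norm_mul]
  have hc : ‖(Fintype.card G : ℂ)⁻¹‖ = (Fintype.card G : ℝ)⁻¹ := by
    rw [norm_inv]; simp
  rw [hc]
  set A := ∑ x, Complex.normSq (u x) with hA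
  set Bv := ∑ x, Complex.normSq (v x) with hB
  have hA0 : 0 ≤ A := Finset.sum_nonneg fun x _ => Complex.normSq_nonneg _
  have hB0 : 0 ≤ Bv := Finset.sum_nonneg fun x _ => Complex.normSq_nonneg _
  have key : ‖∑ x, u x * (starRingEnd ℂ) (v x)‖ ≤ Real.sqrt A * Real.sqrt Bv := by
    have hin := norm_inner_le_norm (𝕜 := ℂ) (E := EuclideanSpace ℂ G)
      ((WithLp.equiv 2 (G → ℂ)).symm v) ((WithLp.equiv 2 (G → ℂ)).symm u)
    have hinner : (inner ℂ ((WithLp.equiv 2 (G → ℂ)).symm v) ((WithLp.equiv 2 (G → ℂ)).symm u) : ℂ)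
        = ∑ x, u x * (starRingEnd ℂ) (v x) := by
      rw [PiLp.inner_apply]
      exact Finset.sum_congr rfl fun x _ => by
        simp [RCLike.inner_apply, mul_comm]
    have hnu : ‖(WithLp.equiv 2 (G → ℂ)).symm u‖ = Real.sqrt A := by
      rw [EuclideanSpace.norm_eq]
      congr 1
      exact Finset.sum_congr rfl fun x _ => by
        simp only [WithLp.equiv_symm_apply, PiLp.toLp_apply]
        rw [Complex.sq_norm]
    have hnv : ‖(WithLp.equiv 2 (G → ℂ)).symm v‖ = Real.sqrt Bv := by
      rw [EuclideanSpace.norm_eq]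
      congr 1
      exact Finset.sum_congr rfl fun x _ => by
        simp only [WithLp.equiv_symm_apply, PiLp.toLp_apply]
        rw [Complex.sq_norm]
    rw [hinner, hnu, hnv] at hin
    calc ‖∑ x, u x * (starRingEnd ℂ) (v x)‖
        = ‖∑ x, u x * (starRingEnd ℂ) (v x)‖ := rfl
      _ ≤ Real.sqrt Bv * Real.sqrt A := hin
      _ = Real.sqrt A * Real.sqrt Bv := mul_comm _ _
  have hn0 : (0:ℝ) ≤ (Fintype.card G : ℝ)⁻¹ := by positivity
  calc (Fintype.card G : ℝ)⁻¹ * ‖∑ x, u x * (starRingEnd ℂ) (v x)‖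
      ≤ (Fintype.card G : ℝ)⁻¹ * (Real.sqrt A * Real.sqrt Bv) :=
        mul_le_mul_of_nonneg_left key hn0
    _ = Real.sqrt ((Fintype.card G : ℝ)⁻¹ * A) * Real.sqrt ((Fintype.card G : ℝ)⁻¹ * Bv) := by
        rw [Real.sqrt_mul hn0, Real.sqrt_mul hn0]
        have hss : Real.sqrt ((Fintype.card G : ℝ)⁻¹) * Real.sqrt ((Fintype.card G : ℝ)⁻¹)
            = (Fintype.card G : ℝ)⁻¹ := Real.mul_self_sqrt hn0
        calc (Fintype.card G : ℝ)⁻¹ * (Real.sqrt A * Real.sqrt Bv)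
            = (Real.sqrt ((Fintype.card G : ℝ)⁻¹) * Real.sqrt ((Fintype.card G : ℝ)⁻¹))
              * (Real.sqrt A * Real.sqrt Bv) := by rw [hss]
          _ = Real.sqrt ((Fintype.card G : ℝ)⁻¹) * Real.sqrt A
              * (Real.sqrt ((Fintype.card G : ℝ)⁻¹) * Real.sqrt Bv) := by ring

end basics


section rep
variable {G : Type*} [Group G] [Fintype G] {k : ℕ} (d : Fin k → ℕ)
  (π : (r : Fin k) → G →* Matrix (Fin (d r)) (Fin (d r)) ℂ)

lemma trace_conj (r : Fin k) (g y : G) :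
    Matrix.trace (π r (g * y * g⁻¹)) = Matrix.trace (π r y) := by
  rw [map_mul, map_mul, Matrix.trace_mul_cycle, ← map_mul, inv_mul_cancel, map_one, one_mul]

lemma schur_intertwine (r s : Fin k) (A : Matrix (Fin (d r)) (Fin (d s)) ℂ) (g : G) :
    π r g * (∑ x, π r x * A * π s x⁻¹) = (∑ x, π r x * A * π s x⁻¹) * π s g := by
  rw [Matrix.mul_sum, Matrix.sum_mul]
  refine Fintype.sum_equiv (Equiv.mulLeft g) _ _ fun x => ?_
  simp only [Equiv.coe_mulLeft, map_mul, mul_inv_rev]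
  rw [Matrix.mul_assoc ((π r) g * (π r) x * A), Matrix.mul_assoc ((π s) x⁻¹), ← map_mul (π s) g⁻¹ g,
    inv_mul_cancel, map_one, Matrix.mul_one, ← Matrix.mul_assoc, ← Matrix.mul_assoc]

lemma avg_zero (hneq : ∀ (r s : Fin k), r ≠ s → ∀ T : Matrix (Fin (d r)) (Fin (d s)) ℂ,
      (∀ x, π r x * T = T * π s x) → T = 0)
    (r s : Fin k) (hrs : r ≠ s) (A : Matrix (Fin (d r)) (Fin (d s)) ℂ) :
    (∑ x, π r x * A * π s x⁻¹) = 0 :=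
  hneq r s hrs _ (fun g => schur_intertwine d π r s A g)

lemma avg_scalar (hdpos : ∀ r, 0 < d r)
    (hirr : ∀ (r : Fin k) (M : Matrix (Fin (d r)) (Fin (d r)) ℂ),
      (∀ x, M * π r x = π r x * M) → ∃ c : ℂ, M = c • (1 : Matrix (Fin (d r)) (Fin (d r)) ℂ))
    (r : Fin k) (A : Matrix (Fin (d r)) (Fin (d r)) ℂ) :
    (Fintype.card G : ℂ)⁻¹ • ∑ x : G, π r x * A * π r x⁻¹
      = (Matrix.trace A / (d r : ℂ)) • (1 : Matrix (Fin (d r)) (Fin (d r)) ℂ) := by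
  obtain ⟨c, hc⟩ := hirr r ((Fintype.card G : ℂ)⁻¹ • ∑ x : G, π r x * A * π r x⁻¹)
    (fun g => by rw [Matrix.smul_mul, Matrix.mul_smul, schur_intertwine])
  have htr : Matrix.trace ((Fintype.card G : ℂ)⁻¹ • ∑ x : G, π r x * A * π r x⁻¹)
      = Matrix.trace A := by
    rw [Matrix.trace_smul, Matrix.trace_sum]
    have h1 : ∀ x : G, Matrix.trace (π r x * A * π r x⁻¹) = Matrix.trace A := fun x => by
      rw [Matrix.trace_mul_cycle, ← map_mul, inv_mul_cancel, map_one, one_mul]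
    rw [Finset.sum_congr rfl fun x _ => h1 x, Finset.sum_const, Finset.card_univ, nsmul_eq_mul,
      smul_eq_mul, ← mul_assoc,
      inv_mul_cancel₀ (by exact_mod_cast Fintype.card_ne_zero : (Fintype.card G : ℂ) ≠ 0), one_mul]
  rw [hc] at htr ⊢
  rw [Matrix.trace_smul, Matrix.trace_one] at htr
  congr 1
  rw [← htr]
  have hd : ((d r : ℂ)) ≠ 0 := by exact_mod_cast (hdpos r).ne'
  rw [smul_eq_mul, Fintype.card_fin]
  field_simp

lemma entry_formula (r s : Fin k) (x : G) (i : Fin (d r)) (j : Fin (d s)) :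
    (π r x * Matrix.single i j (1:ℂ) * π s x⁻¹) i j
      = (π r x) i i * (π s x⁻¹) j j := by
  rw [Matrix.mul_apply]
  have h1 : ∀ b, (π r x * Matrix.single i j (1:ℂ)) i b
      = if b = j then (π r x) i i else 0 := by
    intro b
    rw [Matrix.mul_apply]
    have h2 : ∀ a : Fin (d r), (π r x) i a * Matrix.single i j (1:ℂ) a b
        = if a = i then (if b = j then (π r x) i i else 0) else 0 := by
      intro a
      by_cases ha : a = i <;> by_cases hb : b = j <;>
        simp [Matrix.single, ha, hb] <;> tauto
    rw [Finset.sum_congr rfl fun a _ => h2 a, Finset.sum_ite_eq']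
    simp
  simp_rw [h1]
  simp

lemma char_orth (hdpos : ∀ r, 0 < d r)
    (hirr : ∀ (r : Fin k) (M : Matrix (Fin (d r)) (Fin (d r)) ℂ),
      (∀ x, M * π r x = π r x * M) → ∃ c : ℂ, M = c • (1 : Matrix (Fin (d r)) (Fin (d r)) ℂ))
    (hneq : ∀ (r s : Fin k), r ≠ s → ∀ T : Matrix (Fin (d r)) (Fin (d s)) ℂ,
      (∀ x, π r x * T = T * π s x) → T = 0)
    (r s : Fin k) :
    (Fintype.card G : ℂ)⁻¹ * ∑ x : G, Matrix.trace (π r x) * Matrix.trace (π s x⁻¹)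
      = if r = s then 1 else 0 := by
  have e1 : ∀ x : G, Matrix.trace (π r x) * Matrix.trace (π s x⁻¹)
      = ∑ i : Fin (d r), ∑ j : Fin (d s), (π r x) i i * (π s x⁻¹) j j := fun x => by
    rw [Matrix.trace, Matrix.trace, Finset.sum_mul_sum]
    simp [Matrix.diag]
  have expand : ∑ x : G, Matrix.trace (π r x) * Matrix.trace (π s x⁻¹)
      = ∑ i : Fin (d r), ∑ j : Fin (d s), ∑ x : G,
          (π r x * Matrix.single i j (1:ℂ) * π s x⁻¹) i j := by
    rw [Finset.sum_congr rfl fun x _ => e1 x, Finset.sum_comm]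
    refine Finset.sum_congr rfl fun i _ => ?_
    rw [Finset.sum_comm]
    exact Finset.sum_congr rfl fun j _ =>
      Finset.sum_congr rfl fun x _ => (entry_formula d π r s x i j).symm
  rw [expand]
  rcases eq_or_ne r s with h | h
  · subst h
    simp only [if_pos rfl]
    rw [Finset.mul_sum]
    have key : ∀ i j : Fin (d r), (Fintype.card G : ℂ)⁻¹ * ∑ x : G,
        (π r x * Matrix.single i j (1:ℂ) * π r x⁻¹) i j
        = (Matrix.trace (Matrix.single i j (1:ℂ)) / (d r : ℂ))
            * (1 : Matrix (Fin (d r)) (Fin (d r)) ℂ) i j := by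
      intro i j
      have h2 := congrArg (fun M => M i j) (avg_scalar d π hdpos hirr r (Matrix.single i j (1:ℂ)))
      simp only [Matrix.smul_apply, Matrix.sum_apply, smul_eq_mul] at h2
      exact h2
    rw [Finset.sum_congr rfl fun i _ => by
      rw [Finset.mul_sum, Finset.sum_congr rfl fun j _ => key i j]]
    have diag : ∀ i : Fin (d r), ∑ j : Fin (d r),
        (Matrix.trace (Matrix.single i j (1:ℂ)) / (d r : ℂ))
          * (1 : Matrix (Fin (d r)) (Fin (d r)) ℂ) i j
        = (d r : ℂ)⁻¹ := by
      intro i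
      rw [Finset.sum_eq_single i]
      · simp [Matrix.trace_single_eq_same, Matrix.one_apply]
      · intro j _ hj
        simp [Matrix.one_apply, (Ne.symm hj)]
      · simp
    rw [Finset.sum_congr rfl fun i _ => diag i, Finset.sum_const, Finset.card_univ]
    have hd : ((d r : ℂ)) ≠ 0 := by exact_mod_cast (hdpos r).ne'
    simp [Fintype.card_fin, hd]
  · simp only [if_neg h]
    have key : ∀ (i : Fin (d r)) (j : Fin (d s)), ∑ x : G,
        (π r x * Matrix.single i j (1:ℂ) * π s x⁻¹) i j = 0 := by
      intro i j
      have h2 := congrArg (fun M => M i j) (avg_zero d π hneq r s h (Matrix.single i j (1:ℂ)))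
      simpa [Matrix.sum_apply] using h2
    simp [key]

end rep
section wavelets
variable {G : Type*} [Group G] [Fintype G] {k : ℕ} (d : Fin k → ℕ)
  (π : (r : Fin k) → G →* Matrix (Fin (d r)) (Fin (d r)) ℂ)

lemma weighted_avg
    (hdpos : ∀ r, 0 < d r)
    (hirr : ∀ (r : Fin k) (M : Matrix (Fin (d r)) (Fin (d r)) ℂ),
      (∀ x, M * π r x = π r x * M) → ∃ c : ℂ, M = c • (1 : Matrix (Fin (d r)) (Fin (d r)) ℂ))
    (hneq : ∀ (r s : Fin k), r ≠ s → ∀ T : Matrix (Fin (d r)) (Fin (d s)) ℂ,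
      (∀ x, π r x * T = T * π s x) → T = 0)
    (r s : Fin k) :
    (Fintype.card G : ℂ)⁻¹ • ∑ y : G, Matrix.trace (π r y) • π s y⁻¹
      = ((if r = s then ((d r : ℂ))⁻¹ else 0)) • (1 : Matrix (Fin (d s)) (Fin (d s)) ℂ) := by
  set M := (Fintype.card G : ℂ)⁻¹ • ∑ y : G, Matrix.trace (π r y) • π s y⁻¹ with hM
  have hcomm : ∀ g : G, M * π s g = π s g * M := by
    intro g
    rw [hM, Matrix.smul_mul, Matrix.mul_smul]
    congr 1
    rw [Matrix.sum_mul, Matrix.mul_sum]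
    refine Fintype.sum_equiv ((Equiv.mulLeft g⁻¹).trans (Equiv.mulRight g)) _ _ fun y => ?_
    simp only [Equiv.trans_apply, Equiv.coe_mulLeft, Equiv.coe_mulRight]
    have hχ : Matrix.trace (π r (g⁻¹ * y * g)) = Matrix.trace (π r y) := by
      simpa using trace_conj d π r g⁻¹ y
    rw [hχ, Matrix.smul_mul, Matrix.mul_smul]
    congr 1
    rw [← map_mul, ← map_mul]
    congr 1
    group
  obtain ⟨c, hc⟩ := hirr s M hcomm
  have htr : Matrix.trace M = if r = s then 1 else 0 := by
    rw [hM, Matrix.trace_smul, Matrix.trace_sum]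
    have h1 : ∀ y : G, Matrix.trace (Matrix.trace (π r y) • π s y⁻¹)
        = Matrix.trace (π r y) * Matrix.trace (π s y⁻¹) := fun y => by
      rw [Matrix.trace_smul, smul_eq_mul]
    rw [Finset.sum_congr rfl fun y _ => h1 y, smul_eq_mul,
      char_orth d π hdpos hirr hneq r s]
  rw [hc] at htr ⊢
  rw [Matrix.trace_smul, Matrix.trace_one, Fintype.card_fin, smul_eq_mul] at htr
  congr 1
  have hd : ((d s : ℂ)) ≠ 0 := by exact_mod_cast (hdpos s).ne'
  rcases eq_or_ne r s with h | h
  · subst h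
    simp only [if_pos rfl, ↓reduceIte] at htr ⊢
    field_simp at htr ⊢
    linear_combination htr
  · simp only [if_neg h] at htr ⊢
    rcases mul_eq_zero.mp htr with h' | h'
    · exact h'
    · exact absurd h' hd

lemma conv_char
    (hdpos : ∀ r, 0 < d r)
    (hirr : ∀ (r : Fin k) (M : Matrix (Fin (d r)) (Fin (d r)) ℂ),
      (∀ x, M * π r x = π r x * M) → ∃ c : ℂ, M = c • (1 : Matrix (Fin (d r)) (Fin (d r)) ℂ))
    (hneq : ∀ (r s : Fin k), r ≠ s → ∀ T : Matrix (Fin (d r)) (Fin (d s)) ℂ,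
      (∀ x, π r x * T = T * π s x) → T = 0)
    (r s : Fin k) (x : G) :
    (Fintype.card G : ℂ)⁻¹ * ∑ y : G, Matrix.trace (π r y) * Matrix.trace (π s (y⁻¹ * x))
      = (if r = s then ((d r : ℂ))⁻¹ else 0) * Matrix.trace (π s x) := by
  have e1 : ∀ y : G, Matrix.trace (π r y) * Matrix.trace (π s (y⁻¹ * x))
      = Matrix.trace ((Matrix.trace (π r y) • π s y⁻¹) * π s x) := fun y => by
    rw [Matrix.smul_mul, Matrix.trace_smul, ← map_mul, smul_eq_mul]
  rw [Finset.sum_congr rfl fun y _ => e1 y]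
  have e2 : ∑ y : G, Matrix.trace ((Matrix.trace (π r y) • π s y⁻¹) * π s x)
      = Matrix.trace ((∑ y : G, Matrix.trace (π r y) • π s y⁻¹) * π s x) := by
    rw [Matrix.sum_mul, Matrix.trace_sum]
  rw [e2]
  have e3 : (Fintype.card G : ℂ)⁻¹ * Matrix.trace ((∑ y : G, Matrix.trace (π r y) • π s y⁻¹) * π s x)
      = Matrix.trace (((Fintype.card G : ℂ)⁻¹ • ∑ y : G, Matrix.trace (π r y) • π s y⁻¹) * π s x) := by
    rw [Matrix.smul_mul, Matrix.trace_smul, smul_eq_mul]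
  rw [e3, weighted_avg d π hdpos hirr hneq r s, Matrix.smul_mul, Matrix.one_mul,
    Matrix.trace_smul, smul_eq_mul]

end wavelets
section algebra
variable {G : Type*} [Group G] [Fintype G] {k : ℕ} (d : Fin k → ℕ)
  (π : (r : Fin k) → G →* Matrix (Fin (d r)) (Fin (d r)) ℂ)

lemma conv_gwavelet (hdpos : ∀ r, 0 < d r)
    (hirr : ∀ (r : Fin k) (M : Matrix (Fin (d r)) (Fin (d r)) ℂ),
      (∀ x, M * π r x = π r x * M) → ∃ c : ℂ, M = c • (1 : Matrix (Fin (d r)) (Fin (d r)) ℂ))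
    (hneq : ∀ (r s : Fin k), r ≠ s → ∀ T : Matrix (Fin (d r)) (Fin (d s)) ℂ,
      (∀ x, π r x * T = T * π s x) → T = 0)
    (γ δ : Fin k → ℂ) :
    conv (gwavelet d π γ) (gwavelet d π δ) = gwavelet d π (fun r => γ r * δ r) := by
  funext x
  unfold conv gwavelet
  have e1 : ∑ y : G, (∑ r, (d r:ℂ) * γ r * Matrix.trace (π r y))
        * (∑ s, (d s:ℂ) * δ s * Matrix.trace (π s (y⁻¹ * x)))
      = ∑ r, ∑ s, ((d r:ℂ) * γ r) * ((d s:ℂ) * δ s)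
        * ∑ y : G, Matrix.trace (π r y) * Matrix.trace (π s (y⁻¹ * x)) := by
    simp_rw [Finset.sum_mul_sum]
    rw [Finset.sum_comm]
    refine Finset.sum_congr rfl fun r _ => ?_
    rw [Finset.sum_comm]
    refine Finset.sum_congr rfl fun s _ => ?_
    rw [Finset.mul_sum]
    exact Finset.sum_congr rfl fun y _ => by ring
  rw [e1, Finset.mul_sum]
  refine Finset.sum_congr rfl fun r _ => ?_
  rw [Finset.mul_sum]
  have e2 : ∀ s, (Fintype.card G : ℂ)⁻¹ * (((d r:ℂ) * γ r) * ((d s:ℂ) * δ s)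
        * ∑ y : G, Matrix.trace (π r y) * Matrix.trace (π s (y⁻¹ * x)))
      = ((d r:ℂ) * γ r) * ((d s:ℂ) * δ s)
        * ((if r = s then ((d r : ℂ))⁻¹ else 0) * Matrix.trace (π s x)) := by
    intro s
    rw [← conv_char d π hdpos hirr hneq r s x]
    ring
  rw [Finset.sum_congr rfl fun s _ => e2 s, Finset.sum_eq_single r]
  · have hd : ((d r : ℂ)) ≠ 0 := by exact_mod_cast (hdpos r).ne'
    simp only [if_pos rfl, ↓reduceIte]
    field_simp
  · intro s _ hs
    simp [if_neg (Ne.symm hs)]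
  · simp

lemma conv_assoc (a b c : G → ℂ) : conv (conv a b) c = conv a (conv b c) := by
  funext x
  unfold conv
  have l0 : ∀ y : G, ((Fintype.card G : ℂ)⁻¹ * ∑ z : G, a z * b (z⁻¹ * y)) * c (y⁻¹ * x)
      = (Fintype.card G : ℂ)⁻¹ * ∑ z : G, a z * b (z⁻¹ * y) * c (y⁻¹ * x) := fun y => by
    rw [mul_assoc, Finset.sum_mul]
  have r0 : ∀ z : G, a z * ((Fintype.card G : ℂ)⁻¹ * ∑ y : G, b y * c (y⁻¹ * (z⁻¹ * x)))
      = (Fintype.card G : ℂ)⁻¹ * ∑ y : G, a z * (b y * c (y⁻¹ * (z⁻¹ * x))) := fun z => by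
    rw [← mul_assoc, mul_comm (a z), mul_assoc, Finset.mul_sum]
  rw [Finset.sum_congr rfl fun y _ => l0 y, Finset.sum_congr rfl fun z _ => r0 z,
    ← Finset.mul_sum, ← Finset.mul_sum]
  congr 1
  congr 1
  rw [Finset.sum_comm]
  refine Finset.sum_congr rfl fun z _ => ?_
  refine Fintype.sum_equiv (Equiv.mulLeft z⁻¹) _ _ fun y => ?_
  simp only [Equiv.coe_mulLeft, mul_inv_rev, inv_inv]
  rw [mul_assoc y⁻¹ z, mul_inv_cancel_left, mul_assoc]

lemma gwavelet_star (hunit : ∀ r x, π r x ∈ Matrix.unitaryGroup (Fin (d r)) ℂ)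
    (γ : Fin k → ℂ) (y : G) :
    gwavelet d π (fun r => (starRingEnd ℂ) (γ r)) y
      = (starRingEnd ℂ) (gwavelet d π γ y⁻¹) := by
  unfold gwavelet
  rw [map_sum]
  refine Finset.sum_congr rfl fun r _ => ?_
  rw [map_mul, map_mul]
  have hst : π r y⁻¹ = star (π r y) := by
    have h1 : π r y * star (π r y) = 1 := (Matrix.mem_unitaryGroup_iff.mp (hunit r y))
    calc π r y⁻¹ = π r y⁻¹ * (π r y * star (π r y)) := by rw [h1, Matrix.mul_one]
      _ = (π r y⁻¹ * π r y) * star (π r y) := by rw [Matrix.mul_assoc]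
      _ = star (π r y) := by rw [← map_mul, inv_mul_cancel, map_one, Matrix.one_mul]
  rw [hst]
  have htr : Matrix.trace (star (π r y)) = (starRingEnd ℂ) (Matrix.trace (π r y)) := by
    rw [Matrix.star_eq_conjTranspose, Matrix.trace_conjTranspose]
    rfl
  rw [htr, Complex.conj_conj]
  simp

lemma ip_conv_adjoint (hunit : ∀ r x, π r x ∈ Matrix.unitaryGroup (Fin (d r)) ℂ)
    (γ : Fin k → ℂ) (u v : G → ℂ) :
    ip (conv (gwavelet d π γ) u) v
      = ip u (conv (gwavelet d π (fun r => (starRingEnd ℂ) (γ r))) v) := by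
  unfold ip conv
  have l0 : ∀ z : G, ((Fintype.card G : ℂ)⁻¹ * ∑ y : G, gwavelet d π γ y * u (y⁻¹ * z))
        * (starRingEnd ℂ) (v z)
      = (Fintype.card G : ℂ)⁻¹ * ∑ y : G, gwavelet d π γ y * u (y⁻¹ * z)
        * (starRingEnd ℂ) (v z) := fun z => by
    rw [mul_assoc, Finset.sum_mul]
  have r0 : ∀ z : G, u z * (starRingEnd ℂ) ((Fintype.card G : ℂ)⁻¹
        * ∑ y : G, gwavelet d π (fun r => (starRingEnd ℂ) (γ r)) y * v (y⁻¹ * z))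
      = (Fintype.card G : ℂ)⁻¹ * ∑ y : G, gwavelet d π γ y⁻¹ * (u z
        * (starRingEnd ℂ) (v (y⁻¹ * z))) := fun z => by
    rw [map_mul, map_sum]
    have hterm : ∀ y : G, (starRingEnd ℂ) (gwavelet d π (fun r => (starRingEnd ℂ) (γ r)) y
          * v (y⁻¹ * z))
        = gwavelet d π γ y⁻¹ * (starRingEnd ℂ) (v (y⁻¹ * z)) := fun y => by
      rw [map_mul, gwavelet_star d π hunit, Complex.conj_conj]
    rw [Finset.sum_congr rfl fun y _ => hterm y, map_inv₀, map_natCast,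
      ← mul_assoc, mul_comm (u z), mul_assoc, Finset.mul_sum]
    exact congrArg _ (Finset.sum_congr rfl fun y _ => by ring)
  rw [Finset.sum_congr rfl fun z _ => l0 z, Finset.sum_congr rfl fun z _ => r0 z,
    ← Finset.mul_sum, ← Finset.mul_sum]
  congr 1
  congr 1
  rw [← Finset.sum_product', ← Finset.sum_product', Finset.univ_product_univ]
  refine Fintype.sum_equiv ⟨fun p => (p.2⁻¹ * p.1, p.2⁻¹), fun p => (p.2⁻¹ * p.1, p.2⁻¹),
    fun p => by simp, fun p => by simp⟩ _ _ fun p => ?_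
  simp only [Equiv.coe_fn_mk, inv_inv, mul_inv_cancel_left]
  ring

end algebra
section ops
variable {G : Type*} [Group G] [Fintype G] {k : ℕ} (d : Fin k → ℕ)
  (π : (r : Fin k) → G →* Matrix (Fin (d r)) (Fin (d r)) ℂ)

lemma gwavelet_coeff_sum {ι : Type*} (t : Finset ι) (c : ι → Fin k → ℂ) (y : G) :
    gwavelet d π (fun r => ∑ i ∈ t, c i r) y = ∑ i ∈ t, gwavelet d π (c i) y := by
  unfold gwavelet
  have h1 : ∀ r : Fin k, (d r:ℂ) * (∑ i ∈ t, c i r) * Matrix.trace (π r y)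
      = ∑ i ∈ t, (d r:ℂ) * c i r * Matrix.trace (π r y) := fun r => by
    rw [Finset.mul_sum, Finset.sum_mul]
  rw [Finset.sum_congr rfl fun r _ => h1 r, Finset.sum_comm]

lemma gwavelet_coeff_smul (a : ℂ) (c : Fin k → ℂ) (y : G) :
    gwavelet d π (fun r => a * c r) y = a * gwavelet d π c y := by
  unfold gwavelet
  rw [Finset.mul_sum]
  exact Finset.sum_congr rfl fun r _ => by ring

lemma gwavelet_coeff_sub (c₁ c₂ : Fin k → ℂ) (y : G) :
    gwavelet d π (fun r => c₁ r - c₂ r) y = gwavelet d π c₁ y - gwavelet d π c₂ y := by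
  unfold gwavelet
  rw [← Finset.sum_sub_distrib]
  exact Finset.sum_congr rfl fun r _ => by ring

lemma conv_congr_left {f f' : G → ℂ} (h : ∀ y, f y = f' y) (u : G → ℂ) (x : G) :
    conv f u x = conv f' u x := by
  unfold conv
  congr 1
  exact Finset.sum_congr rfl fun y _ => by rw [h y]

lemma conv_sum_left {ι : Type*} (t : Finset ι) (fs : ι → G → ℂ) (u : G → ℂ) (x : G) :
    conv (fun y => ∑ i ∈ t, fs i y) u x = ∑ i ∈ t, conv (fs i) u x := by
  unfold conv
  have h1 : ∑ y : G, (∑ i ∈ t, fs i y) * u (y⁻¹ * x) = ∑ i ∈ t, ∑ y : G, fs i y * u (y⁻¹ * x) := by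
    rw [Finset.sum_congr rfl fun y _ => Finset.sum_mul _ _ _, Finset.sum_comm]
  rw [h1, Finset.mul_sum]

lemma conv_smul_left (a : ℂ) (f u : G → ℂ) (x : G) :
    conv (fun y => a * f y) u x = a * conv f u x := by
  unfold conv
  have h1 : ∑ y : G, (a * f y) * u (y⁻¹ * x) = a * ∑ y : G, f y * u (y⁻¹ * x) := by
    rw [Finset.mul_sum]
    exact Finset.sum_congr rfl fun y _ => by ring
  rw [h1]
  ring

lemma conv_sub_left (f₁ f₂ u : G → ℂ) (x : G) :
    conv (fun y => f₁ y - f₂ y) u x = conv f₁ u x - conv f₂ u x := by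
  unfold conv
  rw [← mul_sub, ← Finset.sum_sub_distrib]
  congr 1
  exact Finset.sum_congr rfl fun y _ => by ring

lemma ip_sum_left {ι : Type*} (t : Finset ι) (us : ι → G → ℂ) (v : G → ℂ) :
    ip (fun x => ∑ i ∈ t, us i x) v = ∑ i ∈ t, ip (us i) v := by
  unfold ip
  have h1 : ∑ x : G, (∑ i ∈ t, us i x) * (starRingEnd ℂ) (v x)
      = ∑ i ∈ t, ∑ x : G, us i x * (starRingEnd ℂ) (v x) := by
    rw [Finset.sum_congr rfl fun x _ => Finset.sum_mul _ _ _, Finset.sum_comm]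
  rw [h1, Finset.mul_sum]

lemma ip_smul_left (a : ℂ) (u v : G → ℂ) :
    ip (fun x => a * u x) v = a * ip u v := by
  unfold ip
  have h1 : ∑ x : G, (a * u x) * (starRingEnd ℂ) (v x) = a * ∑ x : G, u x * (starRingEnd ℂ) (v x) := by
    rw [Finset.mul_sum]
    exact Finset.sum_congr rfl fun x _ => by ring
  rw [h1]
  ring

lemma ip_sub_left (u₁ u₂ v : G → ℂ) :
    ip (fun x => u₁ x - u₂ x) v = ip u₁ v - ip u₂ v := by
  unfold ip
  rw [← mul_sub, ← Finset.sum_sub_distrib]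
  congr 1
  exact Finset.sum_congr rfl fun x _ => by ring

lemma ip_pos_eq
    (hdpos : ∀ r, 0 < d r)
    (hirr : ∀ (r : Fin k) (M : Matrix (Fin (d r)) (Fin (d r)) ℂ),
      (∀ x, M * π r x = π r x * M) → ∃ c : ℂ, M = c • (1 : Matrix (Fin (d r)) (Fin (d r)) ℂ))
    (hneq : ∀ (r s : Fin k), r ≠ s → ∀ T : Matrix (Fin (d r)) (Fin (d s)) ℂ,
      (∀ x, π r x * T = T * π s x) → T = 0)
    (hunit : ∀ r x, π r x ∈ Matrix.unitaryGroup (Fin (d r)) ℂ)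
    (e : Fin k → ℝ) (he : ∀ r, 0 ≤ e r) (h : G → ℂ) :
    (ip (conv (gwavelet d π (fun r => ((e r : ℝ) : ℂ))) h) h).re
      = nsq (conv (gwavelet d π (fun r => ((Real.sqrt (e r) : ℝ) : ℂ))) h) := by
  have hs : (fun r => ((Real.sqrt (e r) : ℝ):ℂ) * ((Real.sqrt (e r) : ℝ):ℂ))
      = (fun r => ((e r : ℝ):ℂ)) := funext fun r => by
    rw [← Complex.ofReal_mul, Real.mul_self_sqrt (he r)]
  have hcomp : conv (gwavelet d π (fun r => ((e r : ℝ):ℂ))) h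
      = conv (gwavelet d π (fun r => ((Real.sqrt (e r) : ℝ):ℂ)))
          (conv (gwavelet d π (fun r => ((Real.sqrt (e r) : ℝ):ℂ))) h) := by
    rw [← conv_assoc, conv_gwavelet d π hdpos hirr hneq, hs]
  rw [hcomp, ip_conv_adjoint d π hunit]
  have hconj : (fun r => (starRingEnd ℂ) (((Real.sqrt (e r) : ℝ):ℂ)))
      = (fun r => ((Real.sqrt (e r) : ℝ):ℂ)) := funext fun r => Complex.conj_ofReal _
  rw [hconj, ip_self_re]

lemma bessel
    (hdpos : ∀ r, 0 < d r)
    (hirr : ∀ (r : Fin k) (M : Matrix (Fin (d r)) (Fin (d r)) ℂ),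
      (∀ x, M * π r x = π r x * M) → ∃ c : ℂ, M = c • (1 : Matrix (Fin (d r)) (Fin (d r)) ℂ))
    (hneq : ∀ (r s : Fin k), r ≠ s → ∀ T : Matrix (Fin (d r)) (Fin (d s)) ℂ,
      (∀ x, π r x * T = T * π s x) → T = 0)
    (hunit : ∀ r x, π r x ∈ Matrix.unitaryGroup (Fin (d r)) ℂ)
    (e : Fin k → ℝ) (he0 : ∀ r, 0 ≤ e r) (he1 : ∀ r, e r ≤ 1) (h : G → ℂ) :
    (ip (conv (gwavelet d π (fun r => ((e r : ℝ) : ℂ))) h) h).re ≤ nsq h := by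
  set w := conv (gwavelet d π (fun r => ((e r : ℝ):ℂ))) h with hw
  have ha0 : 0 ≤ (ip w h).re := by
    rw [hw, ip_pos_eq d π hdpos hirr hneq hunit e he0 h]
    exact nsq_nonneg _
  have hb : nsq w = (ip (conv (gwavelet d π (fun r => ((e r * e r : ℝ):ℂ))) h) h).re := by
    rw [← ip_self_re, hw, ip_conv_adjoint d π hunit, ← conv_assoc,
      conv_gwavelet d π hdpos hirr hneq, ip_re_symm]
    have hco : (fun r => (starRingEnd ℂ) (((e r : ℝ):ℂ)) * ((e r : ℝ):ℂ))
        = (fun r => ((e r * e r : ℝ):ℂ)) := funext fun r => by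
      rw [Complex.conj_ofReal, ← Complex.ofReal_mul]
    rw [hco]
  have hsub : (ip w h).re - (ip (conv (gwavelet d π (fun r => ((e r * e r : ℝ):ℂ))) h) h).re
      = (ip (conv (gwavelet d π (fun r => ((e r - e r * e r : ℝ):ℂ))) h) h).re := by
    have hcoeff : ∀ y, gwavelet d π (fun r => ((e r - e r * e r : ℝ):ℂ)) y
        = gwavelet d π (fun r => ((e r : ℝ):ℂ)) y
          - gwavelet d π (fun r => ((e r * e r : ℝ):ℂ)) y := fun y => by
      rw [← gwavelet_coeff_sub]
      refine congrFun (congrArg (gwavelet d π) ?_) y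
      funext r
      push_cast
      ring
    have hfe : conv (gwavelet d π (fun r => ((e r - e r * e r : ℝ):ℂ))) h
        = fun x => w x - conv (gwavelet d π (fun r => ((e r * e r : ℝ):ℂ))) h x := by
      funext x
      rw [conv_congr_left hcoeff h x, hw]
      exact conv_sub_left _ _ _ _
    rw [hfe, ip_sub_left, Complex.sub_re]
  have hpos2 : 0 ≤ (ip (conv (gwavelet d π (fun r => ((e r - e r * e r : ℝ):ℂ))) h) h).re := by
    rw [ip_pos_eq d π hdpos hirr hneq hunit _ (fun r => by nlinarith [he0 r, he1 r]) h]
    exact nsq_nonneg _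
  have hbb : nsq w ≤ (ip w h).re := by linarith
  have hcs : (ip w h).re ≤ Real.sqrt (nsq w) * Real.sqrt (nsq h) :=
    (le_abs_self _).trans (ip_cauchy w h)
  have hsq : (ip w h).re * (ip w h).re ≤ nsq w * nsq h := by
    have h1 := mul_le_mul hcs hcs ha0 (by positivity)
    calc (ip w h).re * (ip w h).re
        ≤ (Real.sqrt (nsq w) * Real.sqrt (nsq h)) * (Real.sqrt (nsq w) * Real.sqrt (nsq h)) := h1
      _ = (Real.sqrt (nsq w) * Real.sqrt (nsq w)) * (Real.sqrt (nsq h) * Real.sqrt (nsq h)) := by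
          ring
      _ = nsq w * nsq h := by
          rw [Real.mul_self_sqrt (nsq_nonneg w), Real.mul_self_sqrt (nsq_nonneg h)]
  rcases eq_or_lt_of_le ha0 with h0 | hpos
  · rw [← h0]; exact nsq_nonneg h
  · have h2 : (ip w h).re * (ip w h).re ≤ (ip w h).re * nsq h :=
      hsq.trans (mul_le_mul_of_nonneg_right hbb (nsq_nonneg h))
    exact le_of_mul_le_mul_left h2 hpos

lemma step_bound
    (hdpos : ∀ r, 0 < d r)
    (hirr : ∀ (r : Fin k) (M : Matrix (Fin (d r)) (Fin (d r)) ℂ),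
      (∀ x, M * π r x = π r x * M) → ∃ c : ℂ, M = c • (1 : Matrix (Fin (d r)) (Fin (d r)) ℂ))
    (hneq : ∀ (r s : Fin k), r ≠ s → ∀ T : Matrix (Fin (d r)) (Fin (d s)) ℂ,
      (∀ x, π r x * T = T * π s x) → T = 0)
    (hunit : ∀ r x, π r x ∈ Matrix.unitaryGroup (Fin (d r)) ℂ)
    (c : Fin k → ℝ) (hc0 : ∀ r, 0 ≤ c r) (C : ℝ) (hC0 : 0 ≤ C)
    (hC : ∀ r, c r ≤ C) (h : G → ℂ) :
    (ip (conv (gwavelet d π (fun r => ((c r : ℝ) : ℂ))) h) h).re ≤ C * nsq h := by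
  rcases eq_or_lt_of_le hC0 with h0 | hpos
  · have hczero : ∀ r, c r = 0 := fun r => le_antisymm (h0 ▸ hC r) (hc0 r)
    have hgz : ∀ y : G, gwavelet d π (fun r => ((c r : ℝ):ℂ)) y = 0 := fun y => by
      unfold gwavelet
      exact Finset.sum_eq_zero fun r _ => by simp [hczero r]
    have hcz : ∀ x : G, conv (gwavelet d π (fun r => ((c r : ℝ):ℂ))) h x = 0 := fun x => by
      unfold conv
      rw [Finset.sum_eq_zero fun y _ => by rw [hgz y, zero_mul], mul_zero]
    have hip : ip (conv (gwavelet d π (fun r => ((c r : ℝ):ℂ))) h) h = 0 := by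
      unfold ip
      rw [Finset.sum_eq_zero fun x _ => by rw [hcz x, zero_mul], mul_zero]
    rw [hip, ← h0]
    simp
  · set e := fun r => c r / C with he
    have he0 : ∀ r, 0 ≤ e r := fun r => div_nonneg (hc0 r) hC0
    have he1 : ∀ r, e r ≤ 1 := fun r => (div_le_one hpos).mpr (hC r)
    have hco : (fun r : Fin k => ((c r : ℝ):ℂ)) = (fun r => (C:ℂ) * ((e r : ℝ):ℂ)) := by
      funext r
      rw [← Complex.ofReal_mul]
      congr 1
      simp only [he]; field_simp [hpos.ne']
    have hfe : conv (gwavelet d π (fun r => ((c r : ℝ):ℂ))) h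
        = fun x => (C : ℂ) * conv (gwavelet d π (fun r => ((e r : ℝ):ℂ))) h x := by
      funext x
      rw [hco, conv_congr_left (fun y => gwavelet_coeff_smul d π (C:ℂ) _ y) h x,
        conv_smul_left]
    rw [hfe, ip_smul_left, Complex.re_ofReal_mul]
    exact mul_le_mul_of_nonneg_left (bessel d π hdpos hirr hneq hunit e he0 he1 h) hC0

lemma nsq_conv_eq
    (hdpos : ∀ r, 0 < d r)
    (hirr : ∀ (r : Fin k) (M : Matrix (Fin (d r)) (Fin (d r)) ℂ),
      (∀ x, M * π r x = π r x * M) → ∃ c : ℂ, M = c • (1 : Matrix (Fin (d r)) (Fin (d r)) ℂ))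
    (hneq : ∀ (r s : Fin k), r ≠ s → ∀ T : Matrix (Fin (d r)) (Fin (d s)) ℂ,
      (∀ x, π r x * T = T * π s x) → T = 0)
    (hunit : ∀ r x, π r x ∈ Matrix.unitaryGroup (Fin (d r)) ℂ)
    (γ : Fin k → ℂ) (h : G → ℂ) :
    nsq (conv (gwavelet d π γ) h)
      = (ip (conv (gwavelet d π (fun r => ((Complex.normSq (γ r) : ℝ) : ℂ))) h) h).re := by
  rw [← ip_self_re, ip_conv_adjoint d π hunit, ← conv_assoc,
    conv_gwavelet d π hdpos hirr hneq, ip_re_symm]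
  have hco : (fun r => (starRingEnd ℂ) (γ r) * γ r)
      = (fun r => ((Complex.normSq (γ r) : ℝ):ℂ)) := funext fun r =>
    (Complex.normSq_eq_conj_mul_self).symm
  rw [hco]

lemma bound_A
    (hdpos : ∀ r, 0 < d r)
    (hirr : ∀ (r : Fin k) (M : Matrix (Fin (d r)) (Fin (d r)) ℂ),
      (∀ x, M * π r x = π r x * M) → ∃ c : ℂ, M = c • (1 : Matrix (Fin (d r)) (Fin (d r)) ℂ))
    (hneq : ∀ (r s : Fin k), r ≠ s → ∀ T : Matrix (Fin (d r)) (Fin (d s)) ℂ,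
      (∀ x, π r x * T = T * π s x) → T = 0)
    (hunit : ∀ r x, π r x ∈ Matrix.unitaryGroup (Fin (d r)) ℂ)
    (γ0 : Fin k → ℂ) (B : ℝ) (hB0 : 0 ≤ B)
    (hB : ∀ r, Complex.normSq (γ0 r) ≤ B) (h : G → ℂ) :
    nsq (conv (gwavelet d π γ0) h) ≤ B * nsq h := by
  rw [nsq_conv_eq d π hdpos hirr hneq hunit γ0 h]
  exact step_bound d π hdpos hirr hneq hunit (fun r => Complex.normSq (γ0 r))
    (fun r => Complex.normSq_nonneg _) B hB0 hB h

lemma bound_B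
    (hdpos : ∀ r, 0 < d r)
    (hirr : ∀ (r : Fin k) (M : Matrix (Fin (d r)) (Fin (d r)) ℂ),
      (∀ x, M * π r x = π r x * M) → ∃ c : ℂ, M = c • (1 : Matrix (Fin (d r)) (Fin (d r)) ℂ))
    (hneq : ∀ (r s : Fin k), r ≠ s → ∀ T : Matrix (Fin (d r)) (Fin (d s)) ℂ,
      (∀ x, π r x * T = T * π s x) → T = 0)
    (hunit : ∀ r x, π r x ∈ Matrix.unitaryGroup (Fin (d r)) ℂ)
    {J : ℕ} (γ : Fin (J + 1) → Fin k → ℂ)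
    (hPar : ∀ r : Fin k, ∑ j : Fin (J + 1), Complex.normSq (γ j r) = 1)
    (β : ℝ) (hβ1 : β ≤ 1) (hβ : ∀ r : Fin k, β ≤ Complex.normSq (γ 0 r)) (h : G → ℂ) :
    ∑ j : Fin J, nsq (conv (gwavelet d π (γ j.succ)) h) ≤ (1 - β) * nsq h := by
  have key : ∑ j : Fin J, nsq (conv (gwavelet d π (γ j.succ)) h)
      = (ip (conv (gwavelet d π
          (fun r => ((∑ j : Fin J, Complex.normSq (γ j.succ r) : ℝ) : ℂ))) h) h).re := by
    rw [Finset.sum_congr rfl fun j _ =>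
      nsq_conv_eq d π hdpos hirr hneq hunit (γ j.succ) h]
    rw [← Complex.re_sum, ← ip_sum_left]
    congr 1
    have hfe : (fun x => ∑ j : Fin J,
          conv (gwavelet d π (fun r => ((Complex.normSq (γ j.succ r) : ℝ):ℂ))) h x)
        = conv (gwavelet d π
            (fun r => ((∑ j : Fin J, Complex.normSq (γ j.succ r) : ℝ):ℂ))) h := by
      funext x
      rw [← conv_sum_left]
      refine (conv_congr_left (fun y => ?_) h x).symm
      rw [← gwavelet_coeff_sum]
      refine congrFun (congrArg (gwavelet d π) ?_) y
      funext r
      push_cast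
      rfl
    rw [hfe]
  rw [key]
  refine step_bound d π hdpos hirr hneq hunit _ (fun r => Finset.sum_nonneg fun j _ =>
    Complex.normSq_nonneg _) (1 - β) (by linarith) (fun r => ?_) h
  have hp := hPar r
  rw [Fin.sum_univ_succ] at hp
  have hs : ∑ j : Fin J, Complex.normSq (γ j.succ r) = 1 - Complex.normSq (γ 0 r) := by
    linarith
  rw [hs]
  linarith [hβ r]

end ops
section main
variable {G : Type*} [Group G] [Fintype G] {k : ℕ} (d : Fin k → ℕ)
  (π : (r : Fin k) → G →* Matrix (Fin (d r)) (Fin (d r)) ℂ)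

lemma gwavelet_class (γ : Fin k → ℂ) (g y : G) :
    gwavelet d π γ (g⁻¹ * y * g) = gwavelet d π γ y := by
  unfold gwavelet
  refine Finset.sum_congr rfl fun r _ => ?_
  congr 1
  simpa using trace_conj d π r g⁻¹ y

lemma conv_gwavelet_translate (γ : Fin k → ℂ) (f : G → ℂ) (g x : G) :
    conv (gwavelet d π γ) (fun y => f (g⁻¹ * y)) x = conv (gwavelet d π γ) f (g⁻¹ * x) := by
  unfold conv
  congr 1
  refine Fintype.sum_equiv ((Equiv.mulLeft g⁻¹).trans (Equiv.mulRight g)) _ _ fun y => ?_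
  simp only [Equiv.trans_apply, Equiv.coe_mulLeft, Equiv.coe_mulRight]
  rw [gwavelet_class d π γ g y]
  congr 2
  group

lemma Upath_translate {J : ℕ} (γ : Fin (J + 1) → Fin k → ℂ) (p : List (Fin J))
    (f : G → ℂ) (g : G) :
    ∀ x, Upath (fun j => gwavelet d π (γ j.succ)) p (fun y => f (g⁻¹ * y)) x
      = Upath (fun j => gwavelet d π (γ j.succ)) p f (g⁻¹ * x) := by
  induction p generalizing f with
  | nil => intro x; rfl
  | cons j p ih =>
    intro x
    show Upath _ p (fun z => ((‖conv (gwavelet d π (γ j.succ)) (fun y => f (g⁻¹ * y)) z‖ : ℝ) : ℂ)) x = _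
    rw [show (fun z => (((‖conv (gwavelet d π (γ j.succ)) (fun y => f (g⁻¹ * y)) z‖) : ℝ) : ℂ))
        = (fun z => ((‖conv (gwavelet d π (γ j.succ)) f (g⁻¹ * z)‖ : ℝ) : ℂ))
      from funext fun z => by rw [conv_gwavelet_translate]]
    exact ih (fun z => ((‖conv (gwavelet d π (γ j.succ)) f z‖ : ℝ) : ℂ)) x

lemma Sop_translate {J : ℕ} (γ : Fin (J + 1) → Fin k → ℂ) (p : List (Fin J))
    (f : G → ℂ) (g x : G) :
    Sop d π γ p (fun y => f (g⁻¹ * y)) x = Sop d π γ p f (g⁻¹ * x) := by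
  unfold Sop
  rw [show (Upath (fun j => gwavelet d π (γ j.succ)) p (fun y => f (g⁻¹ * y)))
      = (fun y => Upath (fun j => gwavelet d π (γ j.succ)) p f (g⁻¹ * y))
    from funext (Upath_translate d π γ p f g)]
  exact conv_gwavelet_translate d π (γ 0) _ g x

lemma Upath_decay
    (hdpos : ∀ r, 0 < d r)
    (hirr : ∀ (r : Fin k) (M : Matrix (Fin (d r)) (Fin (d r)) ℂ),
      (∀ x, M * π r x = π r x * M) → ∃ c : ℂ, M = c • (1 : Matrix (Fin (d r)) (Fin (d r)) ℂ))
    (hneq : ∀ (r s : Fin k), r ≠ s → ∀ T : Matrix (Fin (d r)) (Fin (d s)) ℂ,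
      (∀ x, π r x * T = T * π s x) → T = 0)
    (hunit : ∀ r x, π r x ∈ Matrix.unitaryGroup (Fin (d r)) ℂ)
    {J : ℕ} (γ : Fin (J + 1) → Fin k → ℂ)
    (hPar : ∀ r : Fin k, ∑ j : Fin (J + 1), Complex.normSq (γ j r) = 1)
    (β : ℝ) (hβ1 : β ≤ 1) (hβ : ∀ r : Fin k, β ≤ Complex.normSq (γ 0 r)) :
    ∀ (n : ℕ) (f : G → ℂ),
      ∑ p : Fin n → Fin J, nsq (Upath (fun j => gwavelet d π (γ j.succ)) (List.ofFn p) f)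
        ≤ (1 - β) ^ n * nsq f := by
  intro n
  induction n with
  | zero =>
    intro f
    have h1 : ∀ p : Fin 0 → Fin J, List.ofFn p = [] := fun p => by simp
    rw [Finset.sum_congr rfl fun p _ => by rw [h1 p]]
    show ∑ _p : Fin 0 → Fin J, nsq f ≤ _
    rw [Finset.sum_const, Finset.card_univ]
    simp
  | succ n ih =>
    intro f
    have hre : ∑ p : Fin (n+1) → Fin J,
          nsq (Upath (fun j => gwavelet d π (γ j.succ)) (List.ofFn p) f)
        = ∑ q : Fin J × (Fin n → Fin J),
          nsq (Upath (fun j => gwavelet d π (γ j.succ)) (List.ofFn (Fin.cons q.1 q.2)) f) :=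
      (Fintype.sum_equiv (Fin.consEquiv (fun _ : Fin (n+1) => Fin J)) _ _ fun q => rfl).symm
    have hofn : ∀ (j : Fin J) (q : Fin n → Fin J),
        List.ofFn (Fin.cons j q) = j :: List.ofFn q := fun j q => by
      rw [List.ofFn_succ]
      simp
    rw [hre, Fintype.sum_prod_type]
    have hterm : ∀ (j : Fin J) (q : Fin n → Fin J),
        nsq (Upath (fun j => gwavelet d π (γ j.succ)) (List.ofFn (Fin.cons j q)) f)
          = nsq (Upath (fun j => gwavelet d π (γ j.succ)) (List.ofFn q)
              (fun z => ((‖conv (gwavelet d π (γ j.succ)) f z‖ : ℝ) : ℂ))) :=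
      fun j q => by rw [hofn j q]; rfl
    calc ∑ j : Fin J, ∑ q : Fin n → Fin J,
          nsq (Upath (fun j => gwavelet d π (γ j.succ)) (List.ofFn (Fin.cons j q)) f)
        ≤ ∑ j : Fin J, (1 - β) ^ n
            * nsq (fun z => ((‖conv (gwavelet d π (γ j.succ)) f z‖ : ℝ) : ℂ)) := by
          refine Finset.sum_le_sum fun j _ => ?_
          rw [Finset.sum_congr rfl fun q _ => hterm j q]
          exact ih _
      _ = (1 - β) ^ n * ∑ j : Fin J, nsq (conv (gwavelet d π (γ j.succ)) f) := by
          rw [Finset.mul_sum]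
          exact Finset.sum_congr rfl fun j _ => by rw [nsq_abs]
      _ ≤ (1 - β) ^ n * ((1 - β) * nsq f) := by
          refine mul_le_mul_of_nonneg_left ?_ (pow_nonneg (by linarith) n)
          exact bound_B d π hdpos hirr hneq hunit γ hPar β hβ1 hβ f
      _ = (1 - β) ^ (n + 1) * nsq f := by ring

end main

theorem stmt18 {G : Type*} [Group G] [Fintype G]
    {k : ℕ} (d : Fin k → ℕ) (hdpos : ∀ r, 0 < d r)
    (π : (r : Fin k) → G →* Matrix (Fin (d r)) (Fin (d r)) ℂ)
    (hunit : ∀ r x, π r x ∈ Matrix.unitaryGroup (Fin (d r)) ℂ)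
    (hirr : ∀ (r : Fin k) (M : Matrix (Fin (d r)) (Fin (d r)) ℂ),
      (∀ x, M * π r x = π r x * M) → ∃ c : ℂ, M = c • (1 : Matrix (Fin (d r)) (Fin (d r)) ℂ))
    (hneq : ∀ (r s : Fin k), r ≠ s → ∀ T : Matrix (Fin (d r)) (Fin (d s)) ℂ,
      (∀ x, π r x * T = T * π s x) → T = 0)
    (hcard : Nat.card (ConjClasses G) = k)
    {J : ℕ} (γ : Fin (J + 1) → Fin k → ℂ)
    (hPar : ∀ r : Fin k, ∑ j : Fin (J + 1), Complex.normSq (γ j r) = 1)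
    (β B : ℝ) (hβpos : 0 < β) (hβ : ∀ r : Fin k, β ≤ Complex.normSq (γ 0 r))
    (hB : ∀ r : Fin k, Complex.normSq (γ 0 r) ≤ B)
    (f : G → ℂ) (g : G) (m : ℕ) :
    ∑ p : Fin (m + 1) → Fin J,
        nsq (fun x => Sop d π γ (List.ofFn p) (fun y => f (g⁻¹ * y)) x
          - Sop d π γ (List.ofFn p) f x)
      ≤ 4 * B * (1 - β) ^ (m + 1) * nsq f := by
  have hk : 0 < k := by
    rw [← hcard]
    exact Nat.card_pos
  set r0 : Fin k := ⟨0, hk⟩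
  have hle1 : Complex.normSq (γ 0 r0) ≤ 1 := by
    rw [← hPar r0]
    exact Finset.single_le_sum (f := fun j => Complex.normSq (γ j r0))
      (fun j _ => Complex.normSq_nonneg _) (Finset.mem_univ 0)
  have hβ1 : β ≤ 1 := le_trans (hβ r0) hle1
  have hB0 : 0 ≤ B := le_trans hβpos.le (le_trans (hβ r0) (hB r0))
  calc ∑ p : Fin (m + 1) → Fin J,
        nsq (fun x => Sop d π γ (List.ofFn p) (fun y => f (g⁻¹ * y)) x
          - Sop d π γ (List.ofFn p) f x)
      ≤ ∑ p : Fin (m + 1) → Fin J, 4 * nsq (Sop d π γ (List.ofFn p) f) := by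
        refine Finset.sum_le_sum fun p _ => ?_
        have hfun : (fun x => Sop d π γ (List.ofFn p) (fun y => f (g⁻¹ * y)) x
              - Sop d π γ (List.ofFn p) f x)
            = (fun x => Sop d π γ (List.ofFn p) f (g⁻¹ * x)
              - Sop d π γ (List.ofFn p) f x) := funext fun x => by
          rw [Sop_translate]
        rw [hfun]
        have h2 := nsq_sub_le (fun x => Sop d π γ (List.ofFn p) f (g⁻¹ * x))
          (Sop d π γ (List.ofFn p) f)
        rw [nsq_translate (Sop d π γ (List.ofFn p) f) g] at h2
        linarith
    _ = 4 * ∑ p : Fin (m + 1) → Fin J, nsq (Sop d π γ (List.ofFn p) f) := by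
        rw [Finset.mul_sum]
    _ ≤ 4 * (B * ∑ p : Fin (m + 1) → Fin J,
          nsq (Upath (fun j => gwavelet d π (γ j.succ)) (List.ofFn p) f)) := by
        refine mul_le_mul_of_nonneg_left ?_ (by norm_num)
        rw [Finset.mul_sum]
        refine Finset.sum_le_sum fun p _ => ?_
        exact bound_A d π hdpos hirr hneq hunit (γ 0) B hB0 hB _
    _ ≤ 4 * (B * ((1 - β) ^ (m + 1) * nsq f)) := by
        refine mul_le_mul_of_nonneg_left (mul_le_mul_of_nonneg_left ?_ hB0) (by norm_num)
        exact Upath_decay d π hdpos hirr hneq hunit γ hPar β hβ1 hβ (m + 1) f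
    _ = 4 * B * (1 - β) ^ (m + 1) * nsq f := by ring
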